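/- Let H be a positive self-adjoint operator on a finite-dimensional Hilbert space with ground state (kernel) projection P, and let L be a contraction with LP = PL = P such that ‖L(1-P)‖ < 1, satisfying: (i) the converse detectability inequality ‖φ‖² - ‖Lφ‖² ≤ 4⟨φ,Hφ⟩ for all φ, and (ii) the energy contraction ⟨Lφ, H Lφ⟩ ≤ γ⟨φ,Hφ⟩ for all φ and some 0 < γ < 1. Then H has spectral gap at least (1-γ)/4, i.e., ((1-γ)/4)·⟨φ,(1-P)φ⟩ ≤ ⟨φ,Hφ⟩ for all φ. -/

import Mathlib

open ContinuousLinearMap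

set_option maxHeartbeats 1000000 in
/-- Theorem: energy contraction implies gap: finite-dimensional setting,
`T ≥ 0` self-adjoint with kernel projection `P`, `L` a contraction with `LP = PL = P`,
`‖L(1-P)‖ < 1`, converse detectability `‖φ‖² - ‖Lφ‖² ≤ 4⟨φ,Tφ⟩`, and energy contraction
`⟨Lφ,T Lφ⟩ ≤ γ⟨φ,Tφ⟩` with `0 < γ < 1`. Then `((1-γ)/4)⟨φ,(1-P)φ⟩ ≤ ⟨φ,Tφ⟩` for all `φ`. -/
theorem stmt_8 {H : Type*} [NormedAddCommGroup H] [InnerProductSpace ℂ H]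
    [FiniteDimensional ℂ H]
    (T : H →L[ℂ] H) (hT : T.IsPositive)
    (P : H →L[ℂ] H) (hP : IsSelfAdjoint P) (hPidem : P * P = P)
    (hker : LinearMap.ker (T : H →ₗ[ℂ] H) = LinearMap.range (P : H →ₗ[ℂ] H))
    (L : H →L[ℂ] H) (hL : ‖L‖ ≤ 1) (h1 : L * P = P) (h2 : P * L = P)
    (hcontr : ‖L * (1 - P)‖ < 1)
    (hconv : ∀ φ : H, ‖φ‖ ^ 2 - ‖L φ‖ ^ 2 ≤ 4 * T.reApplyInnerSelf φ)
    (γ : ℝ) (hγ0 : 0 < γ) (hγ1 : γ < 1)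
    (hcontraction : ∀ φ : H, T.reApplyInnerSelf (L φ) ≤ γ * T.reApplyInnerSelf φ) :
    ∀ φ : H, (1 - γ) / 4 * ((1 - P).reApplyInnerSelf φ) ≤ T.reApplyInnerSelf φ := by
  intro φ
  have h1γ : 0 < 1 - γ := by linarith
  have hTsa : IsSelfAdjoint T := hT.isSelfAdjoint
  have hTP : T * P = 0 := by
    ext x
    have : P x ∈ LinearMap.ker (T : H →ₗ[ℂ] H) := hker ▸ ⟨x, rfl⟩
    simpa using this
  have hPT : P * T = 0 := by
    have h0 : star (T * P) = 0 := by rw [hTP, star_zero]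
    rwa [star_mul, hTsa.star_eq, hP.star_eq] at h0
  set ψ := φ - P φ with hψ
  have hPψ : P ψ = 0 := by
    have := congrFun (congrArg DFunLike.coe hPidem) φ
    simp only [ContinuousLinearMap.mul_apply] at this
    simp [hψ, map_sub, this]
  have hTψ : T ψ = T φ := by
    have := congrFun (congrArg DFunLike.coe hTP) φ
    simp only [ContinuousLinearMap.mul_apply] at this
    simp [hψ, map_sub, this]
  set E := T.reApplyInnerSelf φ with hE
  have hE0 : 0 ≤ E := hT.2 φ
  have hPTφ : P (T φ) = 0 := by
    have := congrFun (congrArg DFunLike.coe hPT) φ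
    simpa [mul_apply] using this
  have hEψ : T.reApplyInnerSelf ψ = E := by
    have hi : (inner ℂ (T ψ) ψ : ℂ) = inner ℂ (T φ) φ := by
      rw [hTψ, hψ, inner_sub_right]
      have : (inner ℂ (T φ) (P φ) : ℂ) = inner ℂ (P (T φ)) φ := by
        nth_rewrite 1 [← hP.adjoint_eq]
        exact adjoint_inner_right P (T φ) φ
      rw [this, hPTφ]
      simp
    simp [reApplyInnerSelf_apply, hi, hE]
  have hPLn : ∀ n : ℕ, P ((L ^ n) ψ) = 0 := by
    intro n
    induction n with
    | zero => simpa using hPψ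
    | succ n ih =>
      have e1 : (L ^ (n + 1)) ψ = L ((L ^ n) ψ) := by rw [pow_succ', ContinuousLinearMap.mul_apply]
      have hPL : P (L ((L ^ n) ψ)) = P ((L ^ n) ψ) := by
        have := congrFun (congrArg DFunLike.coe h2) ((L ^ n) ψ)
        simpa [mul_apply] using this
      rw [e1, hPL, ih]
  have hLn : ∀ n : ℕ, (L ^ n) ψ = ((L * (1 - P)) ^ n) ψ := by
    intro n
    induction n with
    | zero => rfl
    | succ n ih =>
      have e1 : (L ^ (n + 1)) ψ = L ((L ^ n) ψ) := by rw [pow_succ', ContinuousLinearMap.mul_apply]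
      have e2 : ((L * (1 - P)) ^ (n + 1)) ψ = (L * (1 - P)) (((L * (1 - P)) ^ n) ψ) := by
        rw [pow_succ', ContinuousLinearMap.mul_apply]
      rw [e1, e2, ← ih]
      simp only [ContinuousLinearMap.mul_apply, ContinuousLinearMap.sub_apply, ContinuousLinearMap.one_apply, hPLn n, sub_zero]
  have henergy : ∀ n : ℕ, T.reApplyInnerSelf ((L ^ n) ψ) ≤ γ ^ n * E := by
    intro n
    induction n with
    | zero => simpa using le_of_eq hEψ
    | succ n ih =>
      have e1 : (L ^ (n + 1)) ψ = L ((L ^ n) ψ) := by rw [pow_succ', ContinuousLinearMap.mul_apply]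
      rw [e1]
      calc T.reApplyInnerSelf (L ((L ^ n) ψ)) ≤ γ * T.reApplyInnerSelf ((L ^ n) ψ) :=
            hcontraction _
        _ ≤ γ * (γ ^ n * E) := by nlinarith
        _ = γ ^ (n + 1) * E := by ring
  have htel : ∀ n : ℕ, ‖ψ‖ ^ 2 - ‖(L ^ n) ψ‖ ^ 2 ≤ 4 * E / (1 - γ) := by
    intro n
    have key : ∀ n : ℕ, ‖ψ‖ ^ 2 - ‖(L ^ n) ψ‖ ^ 2 ≤ 4 * E * (∑ k ∈ Finset.range n, γ ^ k) := by
      intro n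
      induction n with
      | zero => simp
      | succ n ih =>
        have e1 : (L ^ (n + 1)) ψ = L ((L ^ n) ψ) := by rw [pow_succ', ContinuousLinearMap.mul_apply]
        have h4 : ‖(L ^ n) ψ‖ ^ 2 - ‖L ((L ^ n) ψ)‖ ^ 2 ≤ 4 * (γ ^ n * E) :=
          le_trans (hconv _) (by nlinarith [henergy n])
        rw [Finset.sum_range_succ, e1]
        nlinarith
    have hsum : (∑ k ∈ Finset.range n, γ ^ k) ≤ 1 / (1 - γ) := by
      have hg := geom_sum_mul γ n
      have hpow : 0 ≤ γ ^ n := pow_nonneg hγ0.le n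
      rw [le_div_iff₀ h1γ]
      nlinarith
    have hsum0 : 0 ≤ ∑ k ∈ Finset.range n, γ ^ k :=
      Finset.sum_nonneg fun k _ => pow_nonneg hγ0.le k
    calc ‖ψ‖ ^ 2 - ‖(L ^ n) ψ‖ ^ 2 ≤ 4 * E * (∑ k ∈ Finset.range n, γ ^ k) := key n
      _ ≤ 4 * E * (1 / (1 - γ)) := by nlinarith
      _ = 4 * E / (1 - γ) := by ring
  have hlim : Filter.Tendsto (fun n => ‖(L ^ n) ψ‖ ^ 2) Filter.atTop (nhds 0) := by
    have hbound' : ∀ n : ℕ, ‖((L * (1 - P)) ^ n) ψ‖ ≤ ‖L * (1 - P)‖ ^ n * ‖ψ‖ := by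
      intro n
      induction n with
      | zero => rw [pow_zero, pow_zero, one_mul, ContinuousLinearMap.one_apply]
      | succ n ih =>
        have e2 : ((L * (1 - P)) ^ (n + 1)) ψ = (L * (1 - P)) (((L * (1 - P)) ^ n) ψ) := by
          rw [pow_succ', ContinuousLinearMap.mul_apply]
        rw [e2, pow_succ']
        calc ‖(L * (1 - P)) (((L * (1 - P)) ^ n) ψ)‖
            ≤ ‖L * (1 - P)‖ * ‖((L * (1 - P)) ^ n) ψ‖ := le_opNorm _ _
          _ ≤ ‖L * (1 - P)‖ * (‖L * (1 - P)‖ ^ n * ‖ψ‖) :=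
              mul_le_mul_of_nonneg_left ih (norm_nonneg _)
          _ = ‖L * (1 - P)‖ * ‖L * (1 - P)‖ ^ n * ‖ψ‖ := by ring
    have hbound : ∀ n : ℕ, ‖(L ^ n) ψ‖ ≤ ‖L * (1 - P)‖ ^ n * ‖ψ‖ := by
      intro n
      rw [hLn n]
      exact hbound' n
    have h0 : Filter.Tendsto (fun n : ℕ => ‖L * (1 - P)‖ ^ n * ‖ψ‖) Filter.atTop (nhds 0) := by
      have h := (tendsto_pow_atTop_nhds_zero_of_lt_one (norm_nonneg (L * (1 - P))) hcontr).mul_const ‖ψ‖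
      rwa [zero_mul] at h
    have hnorm : Filter.Tendsto (fun n => ‖(L ^ n) ψ‖) Filter.atTop (nhds 0) :=
      squeeze_zero (fun n => norm_nonneg _) hbound h0
    simpa using hnorm.pow 2
  have hfinal : ‖ψ‖ ^ 2 ≤ 4 * E / (1 - γ) := by
    have ht : Filter.Tendsto (fun n => ‖ψ‖ ^ 2 - ‖(L ^ n) ψ‖ ^ 2) Filter.atTop
        (nhds (‖ψ‖ ^ 2)) := by
      simpa using (tendsto_const_nhds (x := ‖ψ‖ ^ 2)).sub hlim
    exact le_of_tendsto ht (Filter.Eventually.of_forall htel)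
  have hLHS : (1 - P).reApplyInnerSelf φ = ‖ψ‖ ^ 2 := by
    have h1P : (1 - P) φ = ψ := by simp [hψ, sub_apply]
    have hi : (inner ℂ ψ φ : ℂ) = inner ℂ ψ ψ := by
      rw [hψ, inner_sub_right]
      have : (inner ℂ (φ - P φ) (P φ) : ℂ) = inner ℂ (P (φ - P φ)) φ := by
        nth_rewrite 2 [← hP.adjoint_eq]
        exact adjoint_inner_right P _ φ
      rw [this, ← hψ, hPψ]
      simp
    rw [reApplyInnerSelf_apply, h1P, hi, inner_self_eq_norm_sq (𝕜 := ℂ)]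
  rw [hLHS]
  have hq := (le_div_iff₀ h1γ).mp hfinal
  nlinarith [sq_nonneg ‖ψ‖]
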